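/- Let A be an additive category, C a full subcategory, and coind_C : (C^op, Ab) → (A^op, Ab) the functor defined by (coind_C I)(X) = Hom(Hom_A(−, X)|_C, I). Let F : A^op → Ab be an additive functor and η : F → coind_C I a morphism with restricted morphism η̄ : F|_C → I (under the adjunction isomorphism). If H = Ker η̄ ⊆ F|_C, then Ker η = F_H, where F_H(X) = ⋂_{α : C → X, C ∈ C} F(α)^{-1}(H(C)). -/

import Mathlib

open CategoryTheory Opposite

universe v u

section Stmt17

variable {A : Type u} [Category.{v} A] [Preadditive A] [Limits.HasFiniteBiproducts A]
variable (𝒞 : Set A)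

/-- The restriction `Hom_A(−, X)|_𝒞` of the representable functor to the full
subcategory `𝒞`. -/
def restYoneda (X : A) : (ObjectProperty.FullSubcategory fun Y : A => Y ∈ 𝒞)ᵒᵖ ⥤ AddCommGrpCat.{v} :=
  (ObjectProperty.ι _).op ⋙ preadditiveYoneda.obj X

/-- The morphism `Hom_A(−, X)|_𝒞 ⟶ Hom_A(−, Y)|_𝒞` induced by `f : X ⟶ Y`. -/
def restYonedaMap {X Y : A} (f : X ⟶ Y) : restYoneda 𝒞 X ⟶ restYoneda 𝒞 Y :=
  Functor.whiskerLeft (ObjectProperty.ι _).op (preadditiveYoneda.map f)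

/-- Auslander's determination lemma via coinduction: let
`coind_𝒞 I (X) = Hom(Hom_A(−, X)|_𝒞, I)` and let `η : F ⟶ coind_𝒞 I` be a natural
morphism (given by its components together with naturality), with restricted morphism
`η̄ : F|_𝒞 ⟶ I` given by `η̄_c(x) = (η_c x)(𝟙 c)`. If `H = Ker η̄`, then
`Ker η = F_H`, i.e. `η_X(x) = 0` iff `F(α)(x) ∈ H(c)` for every `α : c → X`
with `c ∈ 𝒞`. -/
theorem ker_eq_determined_subfunctor
    (F : Aᵒᵖ ⥤ AddCommGrpCat.{v}) [F.Additive]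
    (I : (ObjectProperty.FullSubcategory fun Y : A => Y ∈ 𝒞)ᵒᵖ ⥤ AddCommGrpCat.{v})
    (η : ∀ X : A, F.obj (op X) →+ (restYoneda 𝒞 X ⟶ I))
    (hnat : ∀ ⦃X Y : A⦄ (f : X ⟶ Y) (y : F.obj (op Y)),
      η X (F.map f.op y) = restYonedaMap 𝒞 f ≫ η Y y) :
    ∀ (X : A) (x : F.obj (op X)),
      η X x = 0 ↔
        ∀ (c : A) (hc : c ∈ 𝒞) (α : c ⟶ X),
          (η c (F.map α.op x)).app (op ⟨c, hc⟩) (𝟙 c) = 0 := by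
  intro X x
  constructor
  · intro h c hc α
    rw [hnat α x, h]
    simp
    rfl
  · intro h
    ext ⟨c, hc⟩ (α : c ⟶ X)
    have key := congrArg (fun t => t.app (op ⟨c, hc⟩) (𝟙 c)) (hnat α x)
    simp only at key
    have : (restYonedaMap 𝒞 α ≫ η X x).app (op ⟨c, hc⟩) (𝟙 c)
        = (η X x).app (op ⟨c, hc⟩) α := by
      simp [restYonedaMap, restYoneda, preadditiveYoneda]
      change ((η X x).app (op ⟨c, hc⟩)).hom (𝟙 c ≫ α) = _
      exact congrArg ((η X x).app (op ⟨c, hc⟩)).hom (Category.id_comp α)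
    rw [this] at key
    rw [← key, h c hc α]
    simp
    rfl

end Stmt17
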